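/- For every real number x ≥ 1, the sum of 1/d over positive integers d ≤ x is less than log x + γ + 1/x, where γ is the Euler–Mascheroni constant. -/

import Mathlib

open Finset Real

theorem harmonic_sum_lt (x : ℝ) (hx : 1 ≤ x) :
    ∑ d ∈ Finset.Icc 1 ⌊x⌋₊, (1 : ℝ) / d <
      Real.log x + Real.eulerMascheroniConstant + 1 / x := by
  set n := ⌊x⌋₊ with hn
  have hx0 : (0 : ℝ) < x := lt_of_lt_of_le one_pos hx
  have hnx : (n : ℝ) ≤ x := Nat.floor_le hx0.le
  have hxn : x < n + 1 := Nat.lt_floor_add_one x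
  have hsum : ∑ d ∈ Finset.Icc 1 n, (1 : ℝ) / d = (harmonic n : ℝ) := by
    rw [harmonic_eq_sum_Icc]
    push_cast
    simp [one_div]
  rw [hsum]
  have h1 : (harmonic n : ℝ) - Real.log (n + 1) < Real.eulerMascheroniConstant := by
    have := Real.eulerMascheroniSeq_lt_eulerMascheroniConstant n
    simpa [Real.eulerMascheroniSeq] using this
  have h2 : Real.log (n + 1) ≤ Real.log x + 1 / x := by
    have hq : (0 : ℝ) < ((n : ℝ) + 1) / x := by positivity
    have hlog : Real.log (((n : ℝ) + 1) / x) ≤ ((n : ℝ) + 1) / x - 1 :=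
      Real.log_le_sub_one_of_pos hq
    have : Real.log ((n : ℝ) + 1) - Real.log x ≤ ((n : ℝ) + 1) / x - 1 := by
      rwa [Real.log_div (by positivity) hx0.ne'] at hlog
    have hle : ((n : ℝ) + 1) / x - 1 ≤ 1 / x := by
      rw [div_sub' hx0.ne', div_le_div_iff₀ hx0 hx0]
      nlinarith
    linarith
  linarith
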